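/- For each b > 0 and θ ∈ ℝ, the three vectors w₁ = (0,b,0; e^{iθ},0,0; 0,0,0), w₂ = (0,0,0; 0,0,b; 0,e^{iθ},0), w₃ = (0,0,e^{iθ}; 0,0,0; b,0,0) in ℂ⁹ lie in the kernel of ϱ_{b,θ}. -/

import Mathlib

open Matrix Complex

noncomputable def pTheta (θ : ℝ) : ℝ :=
  max (max (2 * Real.cos (θ - 2 * Real.pi / 3)) (2 * Real.cos θ))
    (2 * Real.cos (θ + 2 * Real.pi / 3))

noncomputable def rho (b θ : ℝ) : Matrix (Fin 9) (Fin 9) ℂ :=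
  let p : ℂ := (pTheta θ : ℂ)
  let e : ℂ := Complex.exp (θ * Complex.I)
  let f : ℂ := Complex.exp (-θ * Complex.I)
  !![p, 0, 0, 0, -e, 0, 0, 0, -f;
     0, 1/(b:ℂ), 0, -f, 0, 0, 0, 0, 0;
     0, 0, (b:ℂ), 0, 0, 0, -e, 0, 0;
     0, -e, 0, (b:ℂ), 0, 0, 0, 0, 0;
     -f, 0, 0, 0, p, 0, 0, 0, -e;
     0, 0, 0, 0, 0, 1/(b:ℂ), 0, -f, 0;
     0, 0, -f, 0, 0, 0, 1/(b:ℂ), 0, 0;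
     0, 0, 0, 0, 0, -e, 0, (b:ℂ), 0;
     -e, 0, 0, 0, -f, 0, 0, 0, p]

theorem stmt7 (b θ : ℝ) (hb : 0 < b) :
    (rho b θ).mulVec ![0, (b : ℂ), 0, Complex.exp (θ * Complex.I), 0, 0, 0, 0, 0] = 0 ∧
    (rho b θ).mulVec ![0, 0, 0, 0, 0, (b : ℂ), 0, Complex.exp (θ * Complex.I), 0] = 0 ∧
    (rho b θ).mulVec ![0, 0, Complex.exp (θ * Complex.I), 0, 0, 0, (b : ℂ), 0, 0] = 0 := by
  have hb' : (b : ℂ) ≠ 0 := by exact_mod_cast hb.ne'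
  have hfe : Complex.exp (-(θ * Complex.I)) * Complex.exp (θ * Complex.I) = 1 := by
    rw [← Complex.exp_add]; ring_nf; exact Complex.exp_zero
  refine ⟨?_, ?_, ?_⟩ <;>
  · simp only [rho, neg_mul, Matrix.cons_mulVec, Matrix.cons_dotProduct,
      Matrix.empty_mulVec, dotProduct_of_isEmpty, Matrix.head_cons, Matrix.tail_cons,
      Matrix.cons_eq_zero_iff, Matrix.empty_eq]
    norm_num
    refine ⟨?_, ?_⟩ <;>
      first
        | ring1
        | (rw [mul_inv_cancel₀ hb', hfe]; ring1)
        | (rw [inv_mul_cancel₀ hb', hfe]; ring1)
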